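/- Let σ be a relational vocabulary, k ≥ 1, and let α : 𝒜 → E_k 𝒜 and β : ℬ → E_k ℬ be E_k-coalgebras on finite σ-structures, with associated forest orders a ≤_α a' iff α(a) is a prefix of α(a') (and similarly ≤_β). Then a σ-homomorphism f : 𝒜 → ℬ is a coalgebra morphism, i.e., β ∘ f = E_k(f) ∘ α where E_k(f)[a_1,…,a_j] = [f(a_1),…,f(a_j)], if and only if f maps ≤_α-minimal elements to ≤_β-minimal elements and preserves the covering relation (a ≺_α a' implies f(a) ≺_β f(a')). -/

import Mathlib

/-- A relational vocabulary: a type of relation symbols with arities. -/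
structure RelVocab : Type 1 where
  Rel : Type
  ar : Rel → ℕ

/-- A structure for a relational vocabulary. -/
structure RelStruct (σ : RelVocab) : Type 1 where
  carrier : Type
  rel : ∀ R : σ.Rel, (Fin (σ.ar R) → carrier) → Prop

/-- Homomorphisms of relational structures. -/
def IsHom {σ : RelVocab} (𝒜 ℬ : RelStruct σ) (h : 𝒜.carrier → ℬ.carrier) : Prop :=
  ∀ (R : σ.Rel) (v : Fin (σ.ar R) → 𝒜.carrier), 𝒜.rel R v → ℬ.rel R (fun i => h (v i))

/-- Nonempty sequences over `A` of length at most `k`: the universe of `E_k 𝒜`. -/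
def EkC (k : ℕ) (A : Type) : Type :=
  {l : List A // l ≠ [] ∧ l.length ≤ k}

/-- The counit: the last element of a sequence. -/
def eps {k : ℕ} {A : Type} (s : EkC k A) : A :=
  s.1.getLast s.2.1

/-- Comparability in the prefix order. -/
def Cmp {A : Type} (s t : List A) : Prop :=
  s <+: t ∨ t <+: s

/-- The Ehrenfeucht–Fraïssé comonad `E_k` on structures. -/
def Ek {σ : RelVocab} (k : ℕ) (𝒜 : RelStruct σ) : RelStruct σ where
  carrier := EkC k 𝒜.carrier
  rel R v := (∀ i j, Cmp (v i).1 (v j).1) ∧ 𝒜.rel R (fun i => eps (v i))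

/-- The prefix of `s` of length `i+1`. -/
def prefAt {k : ℕ} {A : Type} (s : EkC k A) (i : Fin s.1.length) : EkC k A :=
  ⟨s.1.take (i + 1), by
    constructor
    · apply List.ne_nil_of_length_pos
      rw [List.length_take]
      exact lt_min (Nat.succ_pos _) (Nat.lt_of_le_of_lt (Nat.zero_le _) i.2)
    · rw [List.length_take]
      exact le_trans (min_le_right _ _) s.2.2⟩

/-- The Kleisli coextension `f* [a_1,…,a_j] = [f[a_1],…,f[a_1,…,a_j]]`. -/
def coext {k : ℕ} {A B : Type} (f : EkC k A → B) (s : EkC k A) : EkC k B :=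
  ⟨List.ofFn (fun i : Fin s.1.length => f (prefAt s i)), by
    constructor
    · apply List.ne_nil_of_length_pos
      rw [List.length_ofFn]
      exact List.length_pos_iff.mpr s.2.1
    · rw [List.length_ofFn]
      exact s.2.2⟩

/-- An `E_k`-coalgebra on `𝒜`: a homomorphism `α : 𝒜 → E_k 𝒜` such that, writing
`α(a) = [a_1,…,a_j]`, one has `a_j = a` and `α(a_i) = [a_1,…,a_i]` for `1 ≤ i ≤ j`. -/
structure EkCoalgebra {σ : RelVocab} (𝒜 : RelStruct σ) (k : ℕ) where
  α : 𝒜.carrier → EkC k 𝒜.carrier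
  hom : IsHom 𝒜 (Ek k 𝒜) α
  counit : ∀ a, eps (α a) = a
  comult : ∀ (a : 𝒜.carrier) (i : Fin (α a).1.length),
    (α ((α a).1.get i)).1 = (α a).1.take (i + 1)

/-- The forest order associated to an `E_k`-coalgebra: `a ≤ a'` iff `α(a) ⊑ α(a')`. -/
def cLe {σ : RelVocab} {𝒜 : RelStruct σ} {k : ℕ} (c : EkCoalgebra 𝒜 k)
    (a a' : 𝒜.carrier) : Prop :=
  (c.α a).1 <+: (c.α a').1

/-- The covering relation of the forest order associated to a coalgebra. -/
def cCov {σ : RelVocab} {𝒜 : RelStruct σ} {k : ℕ} (c : EkCoalgebra 𝒜 k)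
    (a a' : 𝒜.carrier) : Prop :=
  cLe c a a' ∧ a ≠ a' ∧ ∀ z, cLe c a z → cLe c z a' → z = a ∨ z = a'


section AuxStmt18

variable {σ : RelVocab} {𝒜 : RelStruct σ} {k : ℕ}

lemma aux18_counit' (c : EkCoalgebra 𝒜 k) (a : 𝒜.carrier) :
    (c.α a).1.getLast? = some a := by
  rw [List.getLast?_eq_getLast (c.α a).2.1]
  exact congrArg some (c.counit a)

lemma aux18_getLast (c : EkCoalgebra 𝒜 k) (a : 𝒜.carrier) :
    (c.α a).1.getLast (c.α a).2.1 = a := c.counit a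

lemma aux18_alpha_inj (c : EkCoalgebra 𝒜 k) {a a' : 𝒜.carrier}
    (h : (c.α a).1 = (c.α a').1) : a = a' := by
  have h1 := aux18_counit' c a
  rw [h, aux18_counit' c a'] at h1
  exact (Option.some_inj.mp h1).symm

lemma aux18_len_pos (c : EkCoalgebra 𝒜 k) (a : 𝒜.carrier) :
    0 < (c.α a).1.length := List.length_pos_iff.mpr (c.α a).2.1

lemma aux18_elem_le (c : EkCoalgebra 𝒜 k) (a : 𝒜.carrier) (i : Fin (c.α a).1.length) :
    cLe c ((c.α a).1.get i) a := by
  unfold cLe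
  rw [c.comult a i]
  exact List.take_prefix _ _

lemma aux18_elem_len (c : EkCoalgebra 𝒜 k) (a : 𝒜.carrier) (i : Fin (c.α a).1.length) :
    (c.α ((c.α a).1.get i)).1.length = i + 1 := by
  rw [c.comult a i, List.length_take]
  exact min_eq_left i.2

lemma aux18_min_iff (c : EkCoalgebra 𝒜 k) (a : 𝒜.carrier) :
    (∀ b, cLe c b a → b = a) ↔ (c.α a).1.length = 1 := by
  constructor
  · intro h
    obtain ⟨i, hi⟩ : ∃ i : Fin (c.α a).1.length, (i : ℕ) = 0 :=
      ⟨⟨0, aux18_len_pos c a⟩, rfl⟩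
    have hb := h _ (aux18_elem_le c a i)
    have hl := aux18_elem_len c a i
    rw [hb] at hl
    omega
  · intro h b hb
    apply aux18_alpha_inj c
    apply hb.eq_of_length
    have h1 := hb.length_le
    have h2 := aux18_len_pos c b
    omega

lemma aux18_eq_singleton (c : EkCoalgebra 𝒜 k) (a : 𝒜.carrier)
    (h : (c.α a).1.length = 1) : (c.α a).1 = [a] := by
  obtain ⟨x, hx⟩ := List.length_eq_one_iff.mp h
  have h1 := aux18_counit' c a
  rw [hx] at h1 ⊢
  simp only [List.getLast?_singleton, Option.some_inj] at h1
  rw [h1]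

lemma aux18_cov_iff (c : EkCoalgebra 𝒜 k) (a a' : 𝒜.carrier) :
    cCov c a a' ↔ cLe c a a' ∧ (c.α a').1.length = (c.α a).1.length + 1 := by
  constructor
  · rintro ⟨hle, hne, hmid⟩
    refine ⟨hle, ?_⟩
    have hlt : (c.α a).1.length < (c.α a').1.length := by
      rcases lt_or_eq_of_le hle.length_le with h | h
      · exact h
      · exact absurd (aux18_alpha_inj c (hle.eq_of_length h)) hne
    by_contra hlen
    have hlt2 : (c.α a).1.length + 1 < (c.α a').1.length := by omega
    obtain ⟨i, hi⟩ : ∃ i : Fin (c.α a').1.length, (i : ℕ) = (c.α a).1.length :=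
      ⟨⟨(c.α a).1.length, by omega⟩, rfl⟩
    have hzlen := aux18_elem_len c a' i
    have h1 : cLe c a ((c.α a').1.get i) := by
      unfold cLe
      refine List.prefix_of_prefix_length_le hle (aux18_elem_le c a' i) ?_
      rw [hzlen]
      omega
    rcases hmid _ h1 (aux18_elem_le c a' i) with h | h
    · rw [h] at hzlen
      omega
    · rw [h] at hzlen
      omega
  · rintro ⟨hle, hlen⟩
    refine ⟨hle, ?_, ?_⟩
    · intro h
      rw [h] at hlen
      omega
    · intro z h1 h2
      have l1 := h1.length_le
      have l2 := h2.length_le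
      rcases Nat.eq_or_lt_of_le l1 with h | h
      · exact Or.inl (aux18_alpha_inj c (h1.eq_of_length h).symm)
      · exact Or.inr (aux18_alpha_inj c (h2.eq_of_length (by omega)))

lemma aux18_prefix_snoc {A : Type} {l' l : List A} (h : l' <+: l)
    (hlen : l.length = l'.length + 1) (hne : l ≠ []) :
    l = l' ++ [l.getLast hne] := by
  obtain ⟨t, rfl⟩ := h
  have ht : t.length = 1 := by
    rw [List.length_append] at hlen
    omega
  obtain ⟨x, rfl⟩ := List.length_eq_one_iff.mp ht
  congr 1
  simp [List.getLast_append]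

end AuxStmt18

/-- A homomorphism `f : 𝒜 → ℬ` is a coalgebra morphism (`β ∘ f = E_k(f) ∘ α`, where
`E_k(f)` maps sequences elementwise) iff `f` maps minimal elements of the forest order
associated to `α` to minimal elements of that of `β` and preserves the covering
relation. -/
theorem stmt18 (σ : RelVocab) (𝒜 ℬ : RelStruct σ) (k : ℕ) (hk : 1 ≤ k)
    (hA : Finite 𝒜.carrier) (hB : Finite ℬ.carrier)
    (cα : EkCoalgebra 𝒜 k) (cβ : EkCoalgebra ℬ k)
    (f : 𝒜.carrier → ℬ.carrier) (hf : IsHom 𝒜 ℬ f) :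
    (∀ a, (cβ.α (f a)).1 = (cα.α a).1.map f) ↔
    ((∀ a, (∀ b, cLe cα b a → b = a) → ∀ b, cLe cβ b (f a) → b = f a) ∧
      (∀ a a', cCov cα a a' → cCov cβ (f a) (f a'))) := by
  constructor
  · intro H
    constructor
    · intro a ha
      apply (aux18_min_iff cβ (f a)).mpr
      rw [H a, List.length_map]
      exact (aux18_min_iff cα a).mp ha
    · intro a a' hcov
      rw [aux18_cov_iff] at hcov ⊢
      refine ⟨?_, ?_⟩
      · show (cβ.α (f a)).1 <+: (cβ.α (f a')).1
        rw [H a, H a']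
        exact hcov.1.map f
      · rw [H a, H a', List.length_map, List.length_map]
        exact hcov.2
  · rintro ⟨hmin, hcov⟩
    suffices h : ∀ n a, (cα.α a).1.length = n → (cβ.α (f a)).1 = (cα.α a).1.map f by
      exact fun a => h _ a rfl
    intro n
    induction n using Nat.strong_induction_on with
    | _ n ih =>
      intro a hn
      rcases Nat.lt_or_ge n 2 with h2 | h2
      · have hn1 : (cα.α a).1.length = 1 := by
          have := aux18_len_pos cα a
          omega
        have hmin' := hmin a ((aux18_min_iff cα a).mpr hn1)
        have hb1 : (cβ.α (f a)).1.length = 1 := (aux18_min_iff cβ (f a)).mp hmin'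
        rw [aux18_eq_singleton cβ (f a) hb1, aux18_eq_singleton cα a hn1]
        rfl
      · obtain ⟨i, hi⟩ : ∃ i : Fin (cα.α a).1.length, (i : ℕ) = n - 2 :=
          ⟨⟨n - 2, by omega⟩, rfl⟩
        obtain ⟨a', ha'⟩ : ∃ a', a' = (cα.α a).1.get i := ⟨_, rfl⟩
        have hle : cLe cα a' a := by rw [ha']; exact aux18_elem_le cα a i
        have hlen' : (cα.α a').1.length = n - 1 := by
          rw [ha', aux18_elem_len cα a i]
          omega
        have hcov' : cCov cα a' a :=
          (aux18_cov_iff cα a' a).mpr ⟨hle, by omega⟩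
        have hcb := hcov a' a hcov'
        rw [aux18_cov_iff] at hcb
        have ih' := ih (n - 1) (by omega) a' hlen'
        have e2 : (cα.α a).1 = (cα.α a').1 ++ [a] := by
          have h := aux18_prefix_snoc hle (by omega) (cα.α a).2.1
          rwa [aux18_getLast] at h
        have e1 : (cβ.α (f a)).1 = (cβ.α (f a')).1 ++ [f a] := by
          have h := aux18_prefix_snoc hcb.1 hcb.2 (cβ.α (f a)).2.1
          rwa [aux18_getLast] at h
        rw [e1, e2, List.map_append, ih']
        rfl
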